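/- Let ρₙ: Γ → Gₙ be a sequence of discrete faithful weakly type preserving representations of a Kleinian group Γ converging algebraically to ρ_∞. Then the sequence (ρₙ) converges strongly (i.e., also geometrically to ρ_∞(Γ)) if and only if it satisfies UEP: there exists f: ℕ → ℕ with f(N) → ∞ such that for all g ∈ Γ, |g| ≥ N implies d_H(ρₙ(g)·O, O) ≥ f(N) for all n. -/

import Mathlib

open Filter Set
open scoped ENNReal ComplexConjugate MatrixGroups

noncomputable section
open scoped Classical

/-- `SL(2,ℂ)`, acting as (lifts of) orientation preserving isometries of hyperbolic
3-space in the upper half-space model `ℂ × (0,∞) `. -/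
abbrev SL2C := Matrix.SpecialLinearGroup (Fin 2) ℂ

/-- The action of `SL(2,ℂ)` on the upper half-space `{(z,t) : t > 0} ⊆ ℂ × ℝ`
(Poincaré extension of the Möbius action). -/
def uAct (M : SL2C) (p : ℂ × ℝ) : ℂ × ℝ :=
  let a := M.1 0 0; let b := M.1 0 1; let c := M.1 1 0; let d := M.1 1 1
  let D : ℝ := Complex.normSq (c * p.1 + d) + Complex.normSq c * p.2 ^ 2
  (((a * p.1 + b) * conj (c * p.1 + d) + a * conj c * (p.2 ^ 2 : ℝ)) / (D : ℂ), p.2 / D)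

/-- Hyperbolic distance in the upper half-space model. -/
def uDist (p q : ℂ × ℝ) : ℝ :=
  2 * Real.arsinh
    (Real.sqrt (Complex.normSq (p.1 - q.1) + (p.2 - q.2) ^ 2) /
      (2 * Real.sqrt (p.2 * q.2)))

/-- The base point `O = (0,1)` of the upper half-space. -/
def uO : ℂ × ℝ := (0, 1)

/-- Hyperbolic geodesic segment between two points of the upper half-space. -/
def uSeg (x y : ℂ × ℝ) : Set (ℂ × ℝ) :=
  {z | 0 < z.2 ∧ uDist x z + uDist z y = uDist x y}

/-- A parabolic element of `SL(2,ℂ)`: trace `±2` and not `±1`. -/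
def IsParabolicSL (M : SL2C) : Prop :=
  (Matrix.trace M.1) ^ 2 = 4 ∧ M.1 ≠ 1 ∧ M.1 ≠ -1

/-- Discreteness of a subgroup of `SL(2,ℂ)`: every convergent sequence from the
subgroup is eventually constant. -/
def DiscreteSG (G : Subgroup SL2C) : Prop :=
  ∀ u : ℕ → SL2C, (∀ n, u n ∈ G) → ∀ L : SL2C,
    Tendsto (fun n => (u n).1) atTop (nhds L.1) → ∃ N, ∀ n ≥ N, u n = L

/-- Word length with respect to a (symmetrized) generating set `S`. -/
def wordLength {Γ : Type*} [Group Γ] (S : Set Γ) (g : Γ) : ℕ :=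
  sInf {n | ∃ l : List Γ, l.length = n ∧ (∀ x ∈ l, x ∈ S ∨ x⁻¹ ∈ S) ∧ l.prod = g}

/-- Geometric (Chabauty) convergence of a sequence of subsets of `SL(2,ℂ)` to `H`. -/
def GeomLimitSet (Gn : ℕ → Set SL2C) (H : Set SL2C) : Prop :=
  (∀ h ∈ H, ∃ u : ℕ → SL2C, (∀ n, u n ∈ Gn n) ∧
      Tendsto (fun n => (u n).1) atTop (nhds h.1)) ∧
  (∀ φ : ℕ → ℕ, StrictMono φ → ∀ u : ℕ → SL2C, (∀ n, u n ∈ Gn (φ n)) →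
      ∀ L : SL2C, Tendsto (fun n => (u n).1) atTop (nhds L.1) → L ∈ H)

/-- Extract the finite coordinate of a point of the Riemann sphere `OnePoint ℂ`. -/
def ptoC (p : OnePoint ℂ) : ℂ := (show Option ℂ from p).getD 0

/-- The chordal ("Euclidean") metric on the Riemann sphere. -/
def chordal (p q : OnePoint ℂ) : ℝ :=
  if p = OnePoint.infty then (if q = OnePoint.infty then 0 else 2 / Real.sqrt (1 + Complex.normSq (ptoC q)))
  else if q = OnePoint.infty then 2 / Real.sqrt (1 + Complex.normSq (ptoC p))
  else 2 * ‖ptoC p - ptoC q‖ /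
    Real.sqrt ((1 + Complex.normSq (ptoC p)) * (1 + Complex.normSq (ptoC q)))

/-- The Möbius action of `SL(2,ℂ)` on the Riemann sphere. -/
def mobius (M : SL2C) (p : OnePoint ℂ) : OnePoint ℂ :=
  if p = OnePoint.infty then
    (if M.1 1 0 = 0 then OnePoint.infty else ((M.1 0 0 / M.1 1 0 : ℂ) : OnePoint ℂ))
  else
    (if M.1 1 0 * ptoC p + M.1 1 1 = 0 then OnePoint.infty
     else (((M.1 0 0 * ptoC p + M.1 0 1) / (M.1 1 0 * ptoC p + M.1 1 1) : ℂ) : OnePoint ℂ))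

/-- Convergence of a sequence of points of upper half-space to a boundary point of the
Riemann sphere. -/
def convToBdry (u : ℕ → ℂ × ℝ) (ξ : OnePoint ℂ) : Prop :=
  if ξ = OnePoint.infty then Tendsto (fun n => ‖(u n).1‖ + |(u n).2|) atTop atTop
  else Tendsto u atTop (nhds (ptoC ξ, 0))

/-- The limit set of a set of elements of `SL(2,ℂ)`: accumulation points on the sphere
at infinity of the orbit of the base point. -/
def limitSetU (G : Set SL2C) : Set (OnePoint ℂ) :=
  {ξ | ∃ u : ℕ → SL2C, (∀ n, u n ∈ G) ∧ convToBdry (fun n => uAct (u n) uO) ξ}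

/-- Length of a path measured by a distance function, via polygonal approximation. -/
def pathELength {α : Type*} (d : α → α → ℝ) (γ : ℝ → α) (a b : ℝ) : ℝ≥0∞ :=
  ⨆ p : {q : ℕ × (ℕ → ℝ) // Monotone q.2 ∧ q.2 0 = a ∧ q.2 q.1 = b ∧
      ∀ i, q.2 i ∈ Set.Icc a b},
    ∑ i ∈ Finset.range p.1.1, ENNReal.ofReal (d (γ (p.1.2 i)) (γ (p.1.2 (i + 1))))

/-- Intrinsic (induced path) distance inside the set `S`. -/
def intrinsicDist {α : Type*} [TopologicalSpace α] (d : α → α → ℝ) (S : Set α)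
    (x y : α) : ℝ≥0∞ :=
  ⨅ γ : {γ : ℝ → α // ContinuousOn γ (Set.Icc 0 1) ∧ γ 0 = x ∧ γ 1 = y ∧
      ∀ t ∈ Set.Icc (0 : ℝ) 1, γ t ∈ S},
    pathELength d γ.1 0 1

/-- Hyperbolic convexity in the upper half-space model. -/
def uConvex (C : Set (ℂ × ℝ)) : Prop := ∀ x ∈ C, ∀ y ∈ C, uSeg x y ⊆ C

/-- The geodesic line with ideal endpoints `ξ` and `η`. -/
def uLine (ξ η : OnePoint ℂ) : Set (ℂ × ℝ) :=
  {p | ∃ γ : ℝ → ℂ × ℝ, (∀ s t, uDist (γ s) (γ t) = |s - t|) ∧ p ∈ Set.range γ ∧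
    convToBdry (fun n : ℕ => γ n) η ∧ convToBdry (fun n : ℕ => γ (-(n : ℝ))) ξ}

/-- The hyperbolic convex hull of the limit set of `G`. -/
def uHull (G : Set SL2C) : Set (ℂ × ℝ) :=
  ⋂₀ {C | uConvex C ∧ (⋃ ξ ∈ limitSetU G, ⋃ η ∈ limitSetU G, uLine ξ η) ⊆ C}

/-- A horoball in the upper half-space model. -/
def UHoroball (H : Set (ℂ × ℝ)) : Prop :=
  (∃ t₀ : ℝ, 0 < t₀ ∧ H = {p | t₀ ≤ p.2}) ∨
  (∃ z : ℂ, ∃ r : ℝ, 0 < r ∧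
    H = {p | 0 < p.2 ∧ Complex.normSq (p.1 - z) + (p.2 - r) ^ 2 ≤ r ^ 2})

/-- An equidistant tube or horoball ("thin part") in the upper half-space model. -/
def UThin (T : Set (ℂ × ℝ)) : Prop :=
  UHoroball T ∨ ∃ γ : ℝ → ℂ × ℝ, (∀ s t, uDist (γ s) (γ t) = |s - t|) ∧
    ∃ R : ℝ, 0 < R ∧ T = {p | 0 < p.2 ∧ sInf ((uDist p) '' Set.range γ) ≤ R}

/-- Geometric finiteness of a subgroup of `SL(2,ℂ)` (upper half-space model):
discreteness together with an invariant family of disjoint horoballs whose complement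
in the convex core is cobounded for the orbit of the base point. -/
def GeomFiniteU (G : Subgroup SL2C) : Prop :=
  DiscreteSG G ∧ ∃ 𝓗 : Set (Set (ℂ × ℝ)),
    (∀ H ∈ 𝓗, UHoroball H) ∧
    (∀ H ∈ 𝓗, ∀ H' ∈ 𝓗, H ≠ H' → Disjoint H H') ∧
    (∀ g ∈ G, ∀ H ∈ 𝓗, (uAct g) '' H ∈ 𝓗) ∧
    ∃ D : ℝ, ∀ x ∈ uHull (G : Set SL2C) \ ⋃₀ 𝓗, ∃ g ∈ G, uDist x (uAct g uO) ≤ D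

/-- The Cannon–Thurston map for a weakly type preserving isomorphism `ρ` defined on the
Kleinian group `Γ0`: a continuous map of limit sets, equivariant, compatible with
convergence of orbit points to the boundary. -/
def IsCTMap (Γ0 : Subgroup SL2C) (ρ : ↥Γ0 →* SL2C)
    (F : OnePoint ℂ → OnePoint ℂ) : Prop :=
  ContinuousOn F (limitSetU (Γ0 : Set SL2C)) ∧
  Set.MapsTo F (limitSetU (Γ0 : Set SL2C)) (limitSetU (Set.range fun g => ρ g)) ∧
  (∀ g : ↥Γ0, ∀ ξ ∈ limitSetU (Γ0 : Set SL2C),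
    F (mobius g.1 ξ) = mobius (ρ g) (F ξ)) ∧
  (∀ ξ ∈ limitSetU (Γ0 : Set SL2C), ∀ u : ℕ → ↥Γ0,
    convToBdry (fun n => uAct (u n).1 uO) ξ →
    convToBdry (fun n => uAct (ρ (u n)) uO) (F ξ))

/-- The UEP ("uniform embedding of points") condition for a sequence of
representations. -/
def UEP (Γ0 : Subgroup SL2C) (S : Set ↥Γ0) (ρ : ℕ → (↥Γ0 →* SL2C)) : Prop :=
  ∃ f : ℕ → ℕ, Tendsto f atTop atTop ∧
    ∀ (N : ℕ) (g : ↥Γ0) (n : ℕ), N ≤ wordLength S g →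
      (f N : ℝ) ≤ uDist uO (uAct (ρ n g) uO)

/-- The UEPP ("uniform embedding of pairs of points") condition: hyperbolic geodesics
joining the images of the endpoints of Cayley-graph geodesic segments lying outside
large balls lie uniformly far from the base point. -/
def UEPP (Γ0 : Subgroup SL2C) (S : Set ↥Γ0) (ρ : ℕ → (↥Γ0 →* SL2C)) : Prop :=
  ∃ f₁ : ℕ → ℕ, Tendsto f₁ atTop atTop ∧
    ∀ (N n k : ℕ) (γ : ℕ → ↥Γ0),
      (∀ i ≤ k, ∀ j ≤ k, wordLength S ((γ i)⁻¹ * γ j) = Nat.dist i j) →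
      (∀ i ≤ k, N ≤ wordLength S (γ i)) →
      ∀ z ∈ uSeg (uAct (ρ n (γ 0)) uO) (uAct (ρ n (γ k)) uO),
        (f₁ N : ℝ) ≤ uDist uO z


namespace UEPaux

abbrev Mat := Matrix (Fin 2) (Fin 2) ℂ

/-- entrywise L1 norm on 2×2 complex matrices -/
def mnorm (M : Mat) : ℝ :=
  ‖M 0 0‖ + ‖M 0 1‖ + ‖M 1 0‖ + ‖M 1 1‖

lemma mnorm_nonneg (M : Mat) : 0 ≤ mnorm M := by
  unfold mnorm; positivity

lemma mnorm_one : mnorm (1 : Mat) = 2 := by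
  simp [mnorm, Matrix.one_apply]
  norm_num

lemma mnorm_zero : mnorm (0 : Mat) = 0 := by simp [mnorm]

lemma mnorm_add_le (M N : Mat) : mnorm (M + N) ≤ mnorm M + mnorm N := by
  unfold mnorm
  simp only [Matrix.add_apply]
  have h00 := norm_add_le (M 0 0) (N 0 0)
  have h01 := norm_add_le (M 0 1) (N 0 1)
  have h10 := norm_add_le (M 1 0) (N 1 0)
  have h11 := norm_add_le (M 1 1) (N 1 1)
  linarith

lemma mnorm_mul_le (M N : Mat) : mnorm (M * N) ≤ mnorm M * mnorm N := by
  unfold mnorm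
  have e : ∀ i j : Fin 2, (M * N) i j = M i 0 * N 0 j + M i 1 * N 1 j := by
    intro i j
    rw [Matrix.mul_apply, Fin.sum_univ_two]
  have h : ∀ i j : Fin 2, ‖(M * N) i j‖ ≤
      ‖M i 0‖ * ‖N 0 j‖ + ‖M i 1‖ * ‖N 1 j‖ := by
    intro i j
    rw [e i j]
    calc ‖M i 0 * N 0 j + M i 1 * N 1 j‖
        ≤ ‖M i 0 * N 0 j‖ + ‖M i 1 * N 1 j‖ := norm_add_le _ _
      _ = _ := by rw [norm_mul, norm_mul]
  have h00 := h 0 0; have h01 := h 0 1; have h10 := h 1 0; have h11 := h 1 1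
  have n : ∀ i j : Fin 2, 0 ≤ ‖M i j‖ ∧ 0 ≤ ‖N i j‖ := by
    intro i j; exact ⟨norm_nonneg _, norm_nonneg _⟩
  obtain ⟨a00, b00⟩ := n 0 0; obtain ⟨a01, b01⟩ := n 0 1
  obtain ⟨a10, b10⟩ := n 1 0; obtain ⟨a11, b11⟩ := n 1 1
  nlinarith [h00, h01, h10, h11]

lemma mnorm_neg (M : Mat) : mnorm (-M) = mnorm M := by
  simp [mnorm]

lemma abs_entry_le_mnorm (M : Mat) (i j : Fin 2) : ‖M i j‖ ≤ mnorm M := by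
  unfold mnorm
  have h : ∀ k l : Fin 2, 0 ≤ ‖M k l‖ := fun k l => norm_nonneg _
  fin_cases i <;> fin_cases j <;>
    simpa using by nlinarith [h 0 0, h 0 1, h 1 0, h 1 1]

lemma eq_one_of_mnorm_sub_eq (M : Mat) (h : mnorm (M - 1) = 0) : M = 1 := by
  have h' : ∀ i j : Fin 2, (M - 1) i j = 0 := by
    intro i j
    have := abs_entry_le_mnorm (M - 1) i j
    rw [h] at this
    have := le_antisymm this (norm_nonneg _)
    exact norm_eq_zero.1 this
  ext i j
  have := h' i j
  rw [Matrix.sub_apply] at this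
  exact sub_eq_zero.1 this

lemma matTendsto_iff (u : ℕ → Mat) (A : Mat) :
    Tendsto u atTop (nhds A) ↔ ∀ i j, Tendsto (fun n => u n i j) atTop (nhds (A i j)) := by
  refine tendsto_pi_nhds.trans ?_
  constructor
  · intro h i j; exact (tendsto_pi_nhds.1 (h i)) j
  · intro h i; exact tendsto_pi_nhds.2 (h i)

lemma tendsto_mnorm {u : ℕ → Mat} {A : Mat} (h : Tendsto u atTop (nhds A)) :
    Tendsto (fun n => mnorm (u n)) atTop (nhds (mnorm A)) := by
  rw [matTendsto_iff] at h
  have habs : ∀ i j : Fin 2, Tendsto (fun n => ‖u n i j‖) atTop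
      (nhds (‖A i j‖)) := fun i j =>
    (continuous_norm.tendsto _).comp (h i j)
  exact ((((habs 0 0).add (habs 0 1)).add (habs 1 0)).add (habs 1 1))

lemma tendsto_mul_mat {u v : ℕ → Mat} {A B : Mat} (hu : Tendsto u atTop (nhds A))
    (hv : Tendsto v atTop (nhds B)) : Tendsto (fun n => u n * v n) atTop (nhds (A * B)) := by
  rw [matTendsto_iff] at hu hv ⊢
  intro i j
  have : ∀ n, (u n * v n) i j = u n i 0 * v n 0 j + u n i 1 * v n 1 j := by
    intro n; rw [Matrix.mul_apply, Fin.sum_univ_two]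
  simp only [this]
  have : (A * B) i j = A i 0 * B 0 j + A i 1 * B 1 j := by
    rw [Matrix.mul_apply, Fin.sum_univ_two]
  rw [this]
  exact ((hu i 0).mul (hv 0 j)).add ((hu i 1).mul (hv 1 j))

lemma tendsto_det {u : ℕ → Mat} {A : Mat} (h : Tendsto u atTop (nhds A))
    (hdet : ∀ n, (u n).det = 1) : A.det = 1 := by
  rw [matTendsto_iff] at h
  have h1 : Tendsto (fun n => (u n).det) atTop (nhds A.det) := by
    simp only [Matrix.det_fin_two]
    exact ((h 0 0).mul (h 1 1)).sub ((h 0 1).mul (h 1 0))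
  simp only [hdet] at h1
  exact (tendsto_nhds_unique tendsto_const_nhds h1).symm

/-- Bolzano–Weierstrass for sequences in SL(2,ℂ) with bounded mnorm. -/
lemma bw_sl2 (u : ℕ → SL2C) (C : ℝ) (hb : ∀ n, mnorm (u n).1 ≤ C) :
    ∃ ψ : ℕ → ℕ, StrictMono ψ ∧ ∃ L : SL2C,
      Tendsto (fun j => (u (ψ j)).1) atTop (nhds L.1) := by
  set v : ℕ → (Fin 2 → Fin 2 → ℂ) := fun n i j => (u n).1 i j with hv
  have hbd : ∀ n, v n ∈ Metric.closedBall (0 : Fin 2 → Fin 2 → ℂ) (max C 0) := by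
    intro n
    rw [Metric.mem_closedBall, dist_zero_right]
    rw [pi_norm_le_iff_of_nonneg (le_max_right _ _)]
    intro i
    rw [pi_norm_le_iff_of_nonneg (le_max_right _ _)]
    intro j
    calc ‖v n i j‖ = ‖(u n).1 i j‖ := rfl
      _ ≤ mnorm (u n).1 := abs_entry_le_mnorm _ i j
      _ ≤ max C 0 := le_trans (hb n) (le_max_left _ _)
  obtain ⟨a, -, ψ, hψ, ha⟩ := tendsto_subseq_of_bounded Metric.isBounded_closedBall hbd
  have haij : ∀ i j, Tendsto (fun n => (u (ψ n)).1 i j) atTop (nhds (a i j)) := by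
    intro i j
    exact (tendsto_pi_nhds.1 ((tendsto_pi_nhds.1 ha) i)) j
  set A : Mat := Matrix.of a with hA
  have hTend : Tendsto (fun j => (u (ψ j)).1) atTop (nhds A) := by
    rw [matTendsto_iff]
    intro i j
    exact haij i j
  have hdet : A.det = 1 := tendsto_det hTend (fun n => (u (ψ n)).2)
  exact ⟨ψ, hψ, ⟨A, hdet⟩, hTend⟩

lemma algebra_key (P D E : ℝ) (hDne : D ≠ 0) (lag : E + 1 = P * D) :
    P + D = 2 * (1 + 2 * ((E / D ^ 2 + (1 - 1 / D) ^ 2) / (4 * (1 / D)))) := by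
  have e1 : (E / D ^ 2 + (1 - 1 / D) ^ 2) / (4 * (1 / D)) = (E + (D - 1) ^ 2) / (4 * D) := by
    field_simp
  have e2 : (P + D - 2) * D = E + (D - 1) ^ 2 := by linear_combination -lag
  rw [e1, ← e2]
  field_simp
  ring

lemma uDist_nonneg (p q : ℂ × ℝ) : 0 ≤ uDist p q := by
  unfold uDist
  have h1 : 0 ≤ Real.sqrt (Complex.normSq (p.1 - q.1) + (p.2 - q.2) ^ 2) := Real.sqrt_nonneg _
  have h2 : 0 ≤ 2 * Real.sqrt (p.2 * q.2) := by positivity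
  have := Real.arsinh_nonneg_iff.2 (div_nonneg h1 h2)
  linarith

lemma uAct_O (M : SL2C) :
    uAct M uO = ((M.1 0 1 * conj (M.1 1 1) + M.1 0 0 * conj (M.1 1 0)) /
        ((Complex.normSq (M.1 1 0) + Complex.normSq (M.1 1 1) : ℝ) : ℂ),
      1 / (Complex.normSq (M.1 1 0) + Complex.normSq (M.1 1 1))) := by
  unfold uAct uO
  simp only [mul_zero, zero_add, mul_one, one_pow, Complex.ofReal_one]
  norm_num [add_comm]

lemma lemmaA (M : SL2C) :
    Complex.normSq (M.1 0 0) + Complex.normSq (M.1 0 1) + Complex.normSq (M.1 1 0) +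
      Complex.normSq (M.1 1 1) = 2 * Real.cosh (uDist uO (uAct M uO)) := by
  set a := M.1 0 0 with ha
  set b := M.1 0 1 with hb
  set c := M.1 1 0 with hc
  set d := M.1 1 1 with hd
  have hdet : a * d - b * c = 1 := by
    have h2 := M.2
    rwa [Matrix.det_fin_two] at h2
  have hcd : c ≠ 0 ∨ d ≠ 0 := by
    by_contra h
    push_neg at h
    rw [h.1, h.2] at hdet
    simp at hdet
  set D : ℝ := Complex.normSq c + Complex.normSq d with hD
  have hDpos : 0 < D := by
    rcases hcd with h | h
    · have := Complex.normSq_pos.2 h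
      have := Complex.normSq_nonneg d
      rw [hD]; linarith
    · have := Complex.normSq_pos.2 h
      have := Complex.normSq_nonneg c
      rw [hD]; linarith
  set z : ℂ := (b * conj d + a * conj c) / (D : ℂ) with hz
  set t : ℝ := 1 / D with ht
  have htpos : 0 < t := by rw [ht]; positivity
  have hact : uAct M uO = (z, t) := uAct_O M
  rw [hact]
  -- unfold uDist at the point (z, t)
  have hdist : uDist uO (z, t) =
      2 * Real.arsinh (Real.sqrt (Complex.normSq z + (1 - t) ^ 2) / (2 * Real.sqrt t)) := by
    unfold uDist uO
    simp only [zero_sub, Complex.normSq_neg, one_mul]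
  rw [hdist]
  set W : ℝ := Complex.normSq z + (1 - t) ^ 2 with hW
  have hWnn : 0 ≤ W := by
    have := Complex.normSq_nonneg z
    have : (0:ℝ) ≤ (1 - t)^2 := sq_nonneg _
    rw [hW]; positivity
  set x : ℝ := Real.sqrt W / (2 * Real.sqrt t) with hx
  have hcosh : Real.cosh (2 * Real.arsinh x) = 1 + 2 * x ^ 2 := by
    rw [Real.cosh_two_mul, Real.cosh_arsinh, Real.sinh_arsinh, Real.sq_sqrt]
    · ring
    · positivity
  rw [hcosh]
  have hx2 : x ^ 2 = W / (4 * t) := by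
    rw [hx, div_pow, mul_pow, Real.sq_sqrt hWnn, Real.sq_sqrt htpos.le]
    norm_num
  rw [hx2]
  -- now pure algebra
  set E : ℝ := Complex.normSq (b * conj d + a * conj c) with hE
  have hnz : Complex.normSq z = E / D ^ 2 := by
    rw [hz, Complex.normSq_div, Complex.normSq_ofReal, hE]
    ring_nf
  set P : ℝ := Complex.normSq a + Complex.normSq b with hP
  have lag : E + 1 = P * D := by
    have lag0 : E + Complex.normSq (a * d - b * c) =
        (Complex.normSq a + Complex.normSq b) * (Complex.normSq c + Complex.normSq d) := by
      simp only [hE, Complex.normSq_apply, Complex.add_re, Complex.add_im, Complex.mul_re,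
        Complex.mul_im, Complex.conj_re, Complex.conj_im, Complex.sub_re, Complex.sub_im]
      ring
    rw [hdet] at lag0
    simpa [hP, hD] using lag0
  have hteq : t = 1 / D := ht
  rw [hW, hnz, hteq]
  have hDne : D ≠ 0 := hDpos.ne'
  have goal' : P + D = 2 * (1 + 2 * ((E / D ^ 2 + (1 - 1 / D) ^ 2) / (4 * (1 / D)))) :=
    algebra_key P D E hDne lag
  calc Complex.normSq a + Complex.normSq b + Complex.normSq c + Complex.normSq d
      = P + D := by rw [hP, hD]; ring
    _ = 2 * (1 + 2 * ((E / D ^ 2 + (1 - 1 / D) ^ 2) / (4 * (1 / D)))) := goal'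

lemma mnorm_le_of_dist (M : SL2C) (R : ℝ) (h : uDist uO (uAct M uO) ≤ R) :
    mnorm M.1 ≤ 4 * Real.sqrt (2 * Real.cosh R) := by
  have hA := lemmaA M
  have hd0 : 0 ≤ uDist uO (uAct M uO) := uDist_nonneg _ _
  have hcosh : Real.cosh (uDist uO (uAct M uO)) ≤ Real.cosh R := by
    rw [Real.cosh_le_cosh]
    rw [abs_of_nonneg hd0, abs_of_nonneg (le_trans hd0 h)]
    exact h
  have hS : Complex.normSq (M.1 0 0) + Complex.normSq (M.1 0 1) + Complex.normSq (M.1 1 0) +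
      Complex.normSq (M.1 1 1) ≤ 2 * Real.cosh R := by
    rw [hA]; linarith
  have hentry : ∀ i j : Fin 2, ‖M.1 i j‖ ≤ Real.sqrt (2 * Real.cosh R) := by
    intro i j
    rw [Complex.norm_def]
    apply Real.sqrt_le_sqrt
    have h1 := Complex.normSq_nonneg (M.1 0 0)
    have h2 := Complex.normSq_nonneg (M.1 0 1)
    have h3 := Complex.normSq_nonneg (M.1 1 0)
    have h4 := Complex.normSq_nonneg (M.1 1 1)
    fin_cases i <;> fin_cases j <;> simp only [Fin.zero_eta, Fin.mk_one] <;> linarith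
  have := hentry 0 0; have := hentry 0 1; have := hentry 1 0; have := hentry 1 1
  unfold mnorm
  linarith [hentry 0 0, hentry 0 1, hentry 1 0, hentry 1 1]

lemma dist_le_half_Ssum (M : SL2C) :
    uDist uO (uAct M uO) ≤ (Complex.normSq (M.1 0 0) + Complex.normSq (M.1 0 1) +
      Complex.normSq (M.1 1 0) + Complex.normSq (M.1 1 1)) / 2 := by
  have hA := lemmaA M
  set dd := uDist uO (uAct M uO) with hdd
  have hd0 : 0 ≤ dd := uDist_nonneg _ _
  have h1 : dd ≤ Real.sinh dd := Real.self_le_sinh_iff.2 hd0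
  have h2 : Real.sinh dd < Real.cosh dd := Real.sinh_lt_cosh dd
  rw [hA]
  linarith

section Words

variable {Γ0 : Subgroup SL2C} {S : Set ↥Γ0}

lemma exists_word (hgen : Subgroup.closure S = ⊤) (g : ↥Γ0) :
    ∃ l : List ↥Γ0, (∀ x ∈ l, x ∈ S ∨ x⁻¹ ∈ S) ∧ l.prod = g := by
  have hg : g ∈ Subgroup.closure S := by rw [hgen]; exact Subgroup.mem_top g
  induction hg using Subgroup.closure_induction with
  | mem x hx => exact ⟨[x], by simp [hx], by simp⟩
  | one => exact ⟨[], by simp, by simp⟩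
  | mul x y hx hy ihx ihy =>
    obtain ⟨l1, hl1, hp1⟩ := ihx
    obtain ⟨l2, hl2, hp2⟩ := ihy
    exact ⟨l1 ++ l2, by
      intro z hz
      rcases List.mem_append.1 hz with h | h
      exacts [hl1 z h, hl2 z h], by rw [List.prod_append, hp1, hp2]⟩
  | inv x hx ihx =>
    obtain ⟨l, hl, hp⟩ := ihx
    refine ⟨(l.map (fun y => y⁻¹)).reverse, ?_, ?_⟩
    · intro z hz
      rw [List.mem_reverse, List.mem_map] at hz
      obtain ⟨y, hy, rfl⟩ := hz
      rcases hl y hy with h | h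
      · right; simpa using h
      · left; exact h
    · rw [← List.prod_inv_reverse, hp]

lemma wordLength_spec (hgen : Subgroup.closure S = ⊤) (g : ↥Γ0) :
    ∃ l : List ↥Γ0, l.length = wordLength S g ∧ (∀ x ∈ l, x ∈ S ∨ x⁻¹ ∈ S) ∧ l.prod = g := by
  have hne : {n | ∃ l : List ↥Γ0, l.length = n ∧ (∀ x ∈ l, x ∈ S ∨ x⁻¹ ∈ S) ∧ l.prod = g}.Nonempty := by
    obtain ⟨l, hl, hp⟩ := exists_word hgen g
    exact ⟨l.length, l, rfl, hl, hp⟩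
  have := Nat.sInf_mem hne
  obtain ⟨l, hlen, hmem, hprod⟩ := this
  exact ⟨l, hlen, hmem, hprod⟩

lemma wordLength_le_length (g : ↥Γ0) (l : List ↥Γ0) (hmem : ∀ x ∈ l, x ∈ S ∨ x⁻¹ ∈ S)
    (hprod : l.prod = g) : wordLength S g ≤ l.length :=
  Nat.sInf_le ⟨l, rfl, hmem, hprod⟩

lemma finite_lists {γ : Type*} (t : Set γ) (ht : t.Finite) (K : ℕ) :
    {l : List γ | l.length ≤ K ∧ ∀ x ∈ l, x ∈ t}.Finite := by
  induction K with
  | zero =>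
    apply Set.Finite.subset (Set.finite_singleton ([] : List γ))
    intro l hl
    simp only [Set.mem_setOf_eq, Nat.le_zero, List.length_eq_zero_iff] at hl
    simp [hl.1]
  | succ K ih =>
    apply Set.Finite.subset (Set.Finite.insert ([] : List γ) (Set.Finite.image2 List.cons ht ih))
    intro l hl
    obtain ⟨hlen, hmem⟩ := hl
    cases l with
    | nil => exact Set.mem_insert _ _
    | cons hd tl =>
      apply Set.mem_insert_of_mem
      apply Set.mem_image2_of_mem
      · exact hmem hd (by simp)
      · refine ⟨?_, fun x hx => hmem x (by simp [hx])⟩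
        simpa using Nat.succ_le_succ_iff.1 hlen

lemma alphabet_finite (hSfin : S.Finite) : {x : ↥Γ0 | x ∈ S ∨ x⁻¹ ∈ S}.Finite := by
  have h2 : {x : ↥Γ0 | x⁻¹ ∈ S}.Finite := by
    have : {x : ↥Γ0 | x⁻¹ ∈ S} = (fun x : ↥Γ0 => x⁻¹) ⁻¹' S := rfl
    rw [this]
    exact Set.Finite.preimage (Set.injOn_of_injective inv_injective) hSfin
  exact (hSfin.union h2).subset (fun x hx => hx)

lemma ball_finite (hgen : Subgroup.closure S = ⊤) (hSfin : S.Finite) (K : ℕ) :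
    {g : ↥Γ0 | wordLength S g ≤ K}.Finite := by
  apply Set.Finite.subset
    (Set.Finite.image List.prod (finite_lists _ (alphabet_finite hSfin) K))
  intro g hg
  obtain ⟨l, hlen, hmem, hprod⟩ := wordLength_spec hgen g
  exact ⟨l, ⟨by rw [hlen]; exact hg, hmem⟩, hprod⟩

lemma countable_gamma (hgen : Subgroup.closure S = ⊤) (hSfin : S.Finite) :
    Countable ↥Γ0 := by
  set A : Set ↥Γ0 := {x : ↥Γ0 | x ∈ S ∨ x⁻¹ ∈ S} with hAdef
  have hA : A.Countable := (alphabet_finite hSfin).countable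
  haveI := hA.to_subtype
  have hsurj : Function.Surjective
      (fun l : List ↥A => (l.map Subtype.val).prod) := by
    intro g
    obtain ⟨l, hmem, hprod⟩ := exists_word hgen g
    refine ⟨l.attach.map (fun x => ⟨x.1, hmem x.1 x.2⟩), ?_⟩
    show (List.map Subtype.val (List.map (fun x => (⟨x.1, hmem x.1 x.2⟩ : ↥A)) l.attach)).prod = g
    rw [List.map_map]
    have hc : List.map (Subtype.val ∘ fun x => (⟨x.1, hmem x.1 x.2⟩ : ↥A)) l.attach = l :=
      calc List.map (Subtype.val ∘ fun x => (⟨x.1, hmem x.1 x.2⟩ : ↥A)) l.attach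
          = List.map (fun x : {x // x ∈ l} => x.1) l.attach := rfl
        _ = l := List.attach_map_subtype_val l
    rw [hc, hprod]
  exact hsurj.countable

end Words

section Subseq

lemma subseq_prop (Q : ℕ → Prop) (h : ∀ m, ∃ N, m < N ∧ Q N) :
    ∃ e : ℕ → ℕ, StrictMono e ∧ ∀ j, Q (e j) := by
  choose F hF1 hF2 using h
  refine ⟨fun j => F^[j] (F 0), strictMono_nat_of_lt_succ ?_, ?_⟩
  · intro n
    rw [Function.iterate_succ_apply']
    exact hF1 _
  · intro j
    induction j with
    | zero => exact hF2 0
    | succ n _ =>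
      show Q (F^[n+1] (F 0))
      rw [Function.iterate_succ_apply']
      exact hF2 _

lemma subseq_mono_comp (v : ℕ → ℕ) (h : ∀ m, ∃ N, m < N ∧ v m < v N) :
    ∃ e : ℕ → ℕ, StrictMono e ∧ StrictMono (fun j => v (e j)) := by
  choose F hF1 hF2 using h
  refine ⟨fun j => F^[j] (F 0), strictMono_nat_of_lt_succ ?_, strictMono_nat_of_lt_succ ?_⟩
  · intro n
    rw [Function.iterate_succ_apply']
    exact hF1 _
  · intro n
    simp only []
    rw [Function.iterate_succ_apply']
    exact hF2 _

end Subseq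

section NSS

lemma coe_pow_sl2 (A : SL2C) (k : ℕ) : ((A ^ k : SL2C) : Mat) = (A : Mat) ^ k :=
  Matrix.SpecialLinearGroup.coe_pow A k

lemma mnorm_double (X : Mat) : mnorm (X + X) = 2 * mnorm X := by
  have : ∀ i j : Fin 2, ‖(X + X) i j‖ = 2 * ‖X i j‖ := by
    intro i j
    rw [Matrix.add_apply, ← two_mul, norm_mul, Complex.norm_two]
  unfold mnorm
  rw [this 0 0, this 0 1, this 1 0, this 1 1]
  ring

lemma mnorm_lower (X Y : Mat) : mnorm Y - mnorm X ≤ mnorm (X + Y) := by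
  have h : mnorm Y ≤ mnorm (X + Y) + mnorm X := by
    have h1 : Y = (X + Y) + -X := by abel
    calc mnorm Y = mnorm ((X + Y) + -X) := by rw [← h1]
      _ ≤ mnorm (X + Y) + mnorm (-X) := mnorm_add_le _ _
      _ = mnorm (X + Y) + mnorm X := by rw [mnorm_neg]
  linarith

lemma sq_step (B : Mat) : 2 * mnorm (B - 1) - mnorm (B - 1) ^ 2 ≤ mnorm (B * B - 1) := by
  have hexp : B * B - 1 = (B - 1) * (B - 1) + ((B - 1) + (B - 1)) := by
    noncomm_ring
  rw [hexp]
  have h1 := mnorm_lower ((B - 1) * (B - 1)) ((B - 1) + (B - 1))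
  have h2 := mnorm_mul_le (B - 1) (B - 1)
  rw [mnorm_double] at h1
  nlinarith [mnorm_nonneg (B - 1)]

lemma mnorm_sub_one_pos (A : SL2C) (hA : A ≠ 1) : 0 < mnorm (A.1 - 1) := by
  rcases lt_or_eq_of_le (mnorm_nonneg (A.1 - 1)) with h | h
  · exact h
  · exfalso
    apply hA
    have := eq_one_of_mnorm_sub_eq A.1 h.symm
    exact Subtype.ext this

/-- no small subgroups -/
lemma nss (A : SL2C) (hA : A ≠ 1) : ∃ k : ℕ, 1/4 < mnorm ((A ^ k).1 - 1) := by
  by_contra hcon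
  push_neg at hcon
  set m : ℕ → ℝ := fun k => mnorm ((A ^ (2 ^ k)).1 - 1) with hm
  have h0 : 0 < m 0 := by
    have : (2:ℕ) ^ 0 = 1 := rfl
    simp only [hm, this, pow_one]
    exact mnorm_sub_one_pos A hA
  have hstep : ∀ k, (7/4) * m k ≤ m (k + 1) := by
    intro k
    have hsq : (A ^ (2 ^ (k+1))).1 = (A ^ (2 ^ k)).1 * (A ^ (2 ^ k)).1 := by
      rw [pow_succ, pow_mul, coe_pow_sl2, pow_two]
    have := sq_step ((A ^ (2 ^ k)).1)
    rw [← hsq] at this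
    have hle : m k ≤ 1/4 := hcon (2 ^ k)
    have h0k : 0 ≤ m k := mnorm_nonneg _
    nlinarith [this]
  have hgrow : ∀ k, (7/4 : ℝ) ^ k * m 0 ≤ m k := by
    intro k
    induction k with
    | zero => simp
    | succ n ih =>
      have := hstep n
      have h74 : (0:ℝ) < 7/4 := by norm_num
      calc (7/4 : ℝ) ^ (n+1) * m 0 = (7/4) * ((7/4) ^ n * m 0) := by ring
        _ ≤ (7/4) * m n := by nlinarith
        _ ≤ m (n + 1) := this
  obtain ⟨k, hk⟩ := pow_unbounded_of_one_lt ((1/4) / m 0) (by norm_num : (1:ℝ) < 7/4)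
  have : (1/4 : ℝ) < (7/4) ^ k * m 0 := by
    rw [div_lt_iff₀ h0] at hk
    linarith
  have hk2 := hgrow k
  have hk3 := hcon (2 ^ k)
  have : m k ≤ 1/4 := hk3
  linarith

/-- window lemma: powers of an element near 1 hit any small norm window -/
lemma window (A : SL2C) (hA : A ≠ 1) (ε : ℝ) (hε : mnorm (A.1 - 1) ≤ ε) (s : ℝ)
    (hs0 : 0 < s) (hs : s < 1/4) :
    ∃ k : ℕ, s ≤ mnorm ((A ^ k).1 - 1) ∧ mnorm ((A ^ k).1 - 1) ≤ s + (s + 2) * ε := by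
  have hε0 : 0 ≤ ε := le_trans (mnorm_nonneg _) hε
  have hstep : ∀ k : ℕ, mnorm ((A ^ (k+1)).1 - 1) ≤
      mnorm ((A ^ k).1 - 1) + (mnorm ((A ^ k).1 - 1) + 2) * ε := by
    intro k
    have hexp : (A ^ (k+1)).1 - 1 = ((A ^ k).1 - 1) + (A ^ k).1 * (A.1 - 1) := by
      have h1 : (A ^ (k+1)).1 = (A ^ k).1 * A.1 := by
        rw [pow_succ, Matrix.SpecialLinearGroup.coe_mul]
      rw [h1]; noncomm_ring
    rw [hexp]
    calc mnorm (((A ^ k).1 - 1) + (A ^ k).1 * (A.1 - 1))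
        ≤ mnorm ((A ^ k).1 - 1) + mnorm ((A ^ k).1 * (A.1 - 1)) := mnorm_add_le _ _
      _ ≤ mnorm ((A ^ k).1 - 1) + mnorm ((A ^ k).1) * mnorm (A.1 - 1) := by
          have := mnorm_mul_le ((A ^ k).1) (A.1 - 1)
          linarith
      _ ≤ mnorm ((A ^ k).1 - 1) + (mnorm ((A ^ k).1 - 1) + 2) * ε := by
          have hmn : mnorm ((A ^ k).1) ≤ mnorm ((A ^ k).1 - 1) + 2 := by
            have h1 : (A ^ k).1 = ((A ^ k).1 - 1) + 1 := by abel
            calc mnorm ((A ^ k).1) = mnorm (((A ^ k).1 - 1) + 1) := by rw [← h1]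
              _ ≤ mnorm ((A ^ k).1 - 1) + mnorm 1 := mnorm_add_le _ _
              _ = mnorm ((A ^ k).1 - 1) + 2 := by rw [mnorm_one]
          have hm1 : 0 ≤ mnorm (A.1 - 1) := mnorm_nonneg _
          have hmn2 : 0 ≤ mnorm ((A ^ k).1 - 1) + 2 := by linarith [mnorm_nonneg ((A ^ k).1 - 1)]
          nlinarith
  have hex : ∃ k, s ≤ mnorm ((A ^ k).1 - 1) := by
    obtain ⟨k, hk⟩ := nss A hA
    exact ⟨k, by linarith⟩
  classical
  set k0 := Nat.find hex with hk0
  have hP : s ≤ mnorm ((A ^ k0).1 - 1) := Nat.find_spec hex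
  have hk0pos : k0 ≠ 0 := by
    intro h
    rw [h] at hP
    simp only [pow_zero, Matrix.SpecialLinearGroup.coe_one, sub_self, mnorm_zero] at hP
    linarith
  obtain ⟨k1, hk1⟩ := Nat.exists_eq_succ_of_ne_zero hk0pos
  have hprev : ¬ s ≤ mnorm ((A ^ k1).1 - 1) := by
    apply Nat.find_min hex
    omega
  push_neg at hprev
  refine ⟨k0, hP, ?_⟩
  have := hstep k1
  rw [show k1 + 1 = k0 by omega] at this
  have h0 : 0 ≤ mnorm ((A ^ k1).1 - 1) := mnorm_nonneg _
  nlinarith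

end NSS

section Main

variable {Γ0 : Subgroup SL2C} {S : Set ↥Γ0}

def ssum (A : Mat) : ℝ := Complex.normSq (A 0 0) + Complex.normSq (A 0 1) +
  Complex.normSq (A 1 0) + Complex.normSq (A 1 1)

lemma dist_le_half_ssum' (M : SL2C) : uDist uO (uAct M uO) ≤ ssum M.1 / 2 :=
  by have := dist_le_half_Ssum M; unfold ssum; linarith

lemma tendsto_ssum {u : ℕ → Mat} {A : Mat} (h : Tendsto u atTop (nhds A)) :
    Tendsto (fun n => ssum (u n)) atTop (nhds (ssum A)) := by
  rw [matTendsto_iff] at h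
  have hn : ∀ i j : Fin 2, Tendsto (fun n => Complex.normSq (u n i j)) atTop
      (nhds (Complex.normSq (A i j))) :=
    fun i j => (Complex.continuous_normSq.tendsto _).comp (h i j)
  exact (((hn 0 0).add (hn 0 1)).add (hn 1 0)).add (hn 1 1)

lemma reverse_dir (hgen : Subgroup.closure S = ⊤) (hSfin : S.Finite)
    (ρ : ℕ → (↥Γ0 →* SL2C)) (ρlim : ↥Γ0 →* SL2C)
    (halg : ∀ g : ↥Γ0, Tendsto (fun n => ((ρ n g : SL2C) : Matrix (Fin 2) (Fin 2) ℂ))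
      atTop (nhds ((ρlim g : SL2C) : Matrix (Fin 2) (Fin 2) ℂ)))
    (hUEP : UEP Γ0 S ρ) :
    GeomLimitSet (fun n => ((ρ n).range : Set SL2C)) ((ρlim).range : Set SL2C) := by
  obtain ⟨f, hf, hbound⟩ := hUEP
  constructor
  · intro h hh
    rw [SetLike.mem_coe, MonoidHom.mem_range] at hh
    obtain ⟨g, hg⟩ := hh
    refine ⟨fun n => ρ n g, fun n => ⟨g, rfl⟩, ?_⟩
    rw [← hg]
    exact halg g
  · intro φ hφ u hu L hL
    have hgn : ∀ n, ∃ g : ↥Γ0, ρ (φ n) g = u n := by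
      intro n
      have := hu n
      rwa [SetLike.mem_coe, MonoidHom.mem_range] at this
    choose g hg using hgn
    by_cases hbdd : ∃ K, ∀ n, wordLength S (g n) ≤ K
    · -- bounded word length: pigeonhole
      obtain ⟨K, hK⟩ := hbdd
      have hball := ball_finite hgen hSfin K
      have hfib : ∃ x : ↥Γ0, {n | g n = x}.Infinite := by
        by_contra hcon
        push_neg at hcon
        have huniv : (Set.univ : Set ℕ) ⊆ ⋃ x ∈ {y : ↥Γ0 | wordLength S y ≤ K}, {n | g n = x} := by
          intro n _
          exact Set.mem_biUnion (hK n) rfl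
        exact Set.infinite_univ (Set.Finite.subset (Set.Finite.biUnion hball
          (fun x _ => hcon x)) huniv)
      obtain ⟨x, hx⟩ := hfib
      obtain ⟨e, he, hQ⟩ := subseq_prop (fun N => g N = x) (by
        intro mm
        obtain ⟨b, hb, hlt⟩ := hx.exists_gt mm
        exact ⟨b, hlt, hb⟩)
      have h1 : Tendsto (fun j => (u (e j)).1) atTop (nhds L.1) :=
        hL.comp he.tendsto_atTop
      have h2 : Tendsto (fun j => (u (e j)).1) atTop (nhds ((ρlim x).1)) := by
        have : ∀ j, (u (e j)).1 = ((ρ (φ (e j)) x : SL2C) : Mat) := by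
          intro j
          rw [← hg (e j), hQ j]
        simp only [this]
        exact (halg x).comp ((hφ.comp he).tendsto_atTop)
      have : (ρlim x) = L := Subtype.ext (tendsto_nhds_unique h2 h1)
      rw [SetLike.mem_coe, MonoidHom.mem_range]
      exact ⟨x, this⟩
    · -- unbounded: contradiction with UEP
      exfalso
      push_neg at hbdd
      set C : ℝ := ssum L.1 / 2 + 1 with hC
      obtain ⟨N0, hN0⟩ := (hf.eventually_ge_atTop (Nat.ceil (max C 0))).exists
      have hfN0 : C ≤ (f N0 : ℝ) := by
        calc C ≤ max C 0 := le_max_left _ _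
          _ ≤ (Nat.ceil (max C 0) : ℝ) := Nat.le_ceil _
          _ ≤ (f N0 : ℝ) := by exact_mod_cast hN0
      have hev : ∀ᶠ n in atTop, ssum (u n).1 < ssum L.1 + 1 := by
        have := tendsto_ssum hL
        exact this.eventually_lt_const (by linarith)
      obtain ⟨M0, hM0⟩ := hev.exists_forall_of_atTop
      set B := (Finset.range M0).sup (fun n => wordLength S (g n)) with hB
      obtain ⟨n, hn⟩ := hbdd (max N0 B)
      have hnM0 : M0 ≤ n := by
        by_contra hcon
        push_neg at hcon
        have h1 : wordLength S (g n) ≤ B := by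
          rw [hB]
          exact Finset.le_sup (f := fun n => wordLength S (g n)) (Finset.mem_range.2 hcon)
        have h2 : wordLength S (g n) ≤ max N0 B := le_trans h1 (le_max_right _ _)
        omega
      have hd1 : (f N0 : ℝ) ≤ uDist uO (uAct (ρ (φ n) (g n)) uO) := by
        apply hbound
        have : N0 ≤ max N0 B := le_max_left _ _
        omega
      have hd2 : uDist uO (uAct (u n) uO) ≤ ssum (u n).1 / 2 := dist_le_half_ssum' _
      rw [hg n] at hd1
      have := hM0 n hnM0
      rw [hC] at hfN0
      linarith

end Main

section Forward

variable {Γ0 : Subgroup SL2C} {S : Set ↥Γ0}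

lemma tendsto_sub_one {u : ℕ → Mat} {A : Mat} (h : Tendsto u atTop (nhds A)) :
    Tendsto (fun n => u n - 1) atTop (nhds (A - 1)) := by
  rw [matTendsto_iff] at h ⊢
  intro i j
  have : ∀ n, (u n - 1) i j = u n i j - (1 : Mat) i j := fun n => rfl
  simp only [this, Matrix.sub_apply]
  exact (h i j).sub tendsto_const_nhds

lemma main_contra (hgen : Subgroup.closure S = ⊤) (hSfin : S.Finite)
    (ρ : ℕ → (↥Γ0 →* SL2C)) (ρlim : ↥Γ0 →* SL2C)
    (hfaith : ∀ n, Function.Injective (ρ n))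
    (hdisc : ∀ n, DiscreteSG (ρ n).range)
    (halg : ∀ g : ↥Γ0, Tendsto (fun n => ((ρ n g : SL2C) : Matrix (Fin 2) (Fin 2) ℂ))
      atTop (nhds ((ρlim g : SL2C) : Matrix (Fin 2) (Fin 2) ℂ)))
    (hGeom : GeomLimitSet (fun n => ((ρ n).range : Set SL2C)) ((ρlim).range : Set SL2C))
    (R : ℝ) (gs : ℕ → ↥Γ0) (ns : ℕ → ℕ)
    (hw : ∀ N, N ≤ wordLength S (gs N))
    (hdist : ∀ N, uDist uO (uAct (ρ (ns N) (gs N)) uO) < R) : False := by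
  haveI hcount : Countable ↥Γ0 := countable_gamma hgen hSfin
  set C0 : ℝ := 4 * Real.sqrt (2 * Real.cosh R) with hC0
  have hmb : ∀ N, mnorm (ρ (ns N) (gs N)).1 ≤ C0 :=
    fun N => mnorm_le_of_dist _ R (hdist N).le
  by_cases hfib : ∃ n0, {N | ns N = n0}.Infinite
  · -- CASE A: a fixed representation occurs infinitely often
    obtain ⟨n0, hinf⟩ := hfib
    obtain ⟨e, he, hQ⟩ := subseq_prop (fun N => ns N = n0) (by
      intro mm
      obtain ⟨b, hb, hlt⟩ := hinf.exists_gt mm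
      exact ⟨b, hlt, hb⟩)
    set u : ℕ → SL2C := fun j => ρ n0 (gs (e j)) with hu
    have hub : ∀ j, mnorm (u j).1 ≤ C0 := by
      intro j
      have h1 := hmb (e j)
      rw [hQ j] at h1
      exact h1
    obtain ⟨ψ, hψ, L, hLt⟩ := bw_sl2 u C0 hub
    obtain ⟨J, hJ⟩ := hdisc n0 (fun j => u (ψ j)) (fun j => ⟨gs (e (ψ j)), rfl⟩) L hLt
    set W := wordLength S (gs (e (ψ J))) with hW
    set j1 := max J (W + 1) with hj1
    have hgeq : gs (e (ψ j1)) = gs (e (ψ J)) := by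
      apply hfaith n0
      have h1 : u (ψ j1) = L := hJ j1 (le_max_left _ _)
      have h2 : u (ψ J) = L := hJ J le_rfl
      rw [hu] at h1 h2
      simp only [] at h1 h2
      rw [h1, h2]
    have hge : W + 1 ≤ e (ψ j1) := by
      calc W + 1 ≤ j1 := le_max_right _ _
        _ ≤ ψ j1 := hψ.le_apply
        _ ≤ e (ψ j1) := he.le_apply
    have := hw (e (ψ j1))
    rw [hgeq] at this
    omega
  · -- CASE B: representations escape to infinity
    push_neg at hfib
    have hstep : ∀ m, ∃ N, m < N ∧ ns m < ns N := by
      intro m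
      have hfin : {N | ns N ≤ ns m}.Finite := by
        have : {N | ns N ≤ ns m} ⊆ ⋃ v ∈ Set.Iic (ns m), {N | ns N = v} := by
          intro N hN
          exact Set.mem_biUnion hN rfl
        exact Set.Finite.subset (Set.Finite.biUnion (Set.finite_Iic _) (fun v _ => hfib v)) this
      have hfin2 : ({N | ns N ≤ ns m} ∪ Set.Iic m).Finite := hfin.union (Set.finite_Iic m)
      obtain ⟨N, hN⟩ := hfin2.infinite_compl.nonempty
      simp only [Set.mem_compl_iff, Set.mem_union, Set.mem_setOf_eq, Set.mem_Iic, not_or,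
        not_le] at hN
      exact ⟨N, hN.2, hN.1⟩
    obtain ⟨e, he, hemono⟩ := subseq_mono_comp ns hstep
    set u : ℕ → SL2C := fun j => ρ (ns (e j)) (gs (e j)) with hu
    have hub : ∀ j, mnorm (u j).1 ≤ C0 := fun j => hmb (e j)
    obtain ⟨ψ, hψ, L, hLt⟩ := bw_sl2 u C0 hub
    set m : ℕ → ℕ := fun j => ns (e (ψ j)) with hm
    set G : ℕ → ↥Γ0 := fun j => gs (e (ψ j)) with hG
    have hmm : StrictMono m := hemono.comp hψ
    have hLmem : L ∈ ((ρlim).range : Set SL2C) := by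
      apply hGeom.2 m hmm (fun j => u (ψ j)) (fun j => ⟨G j, rfl⟩) L hLt
    rw [SetLike.mem_coe, MonoidHom.mem_range] at hLmem
    obtain ⟨h0, hh0⟩ := hLmem
    have hwG : ∀ j, j ≤ wordLength S (G j) := by
      intro j
      calc j ≤ ψ j := hψ.le_apply
        _ ≤ e (ψ j) := he.le_apply
        _ ≤ wordLength S (gs (e (ψ j))) := hw _
    set a : ℕ → SL2C := fun j => ρ (m j) (h0⁻¹ * G j) with ha
    have hatend : Tendsto (fun j => (a j).1) atTop (nhds (1 : Mat)) := by
      have h1 : Tendsto (fun j => (ρ (m j) h0⁻¹).1) atTop (nhds ((ρlim h0⁻¹)).1) :=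
        (halg h0⁻¹).comp hmm.tendsto_atTop
      have h2 : ∀ j, (a j).1 = (ρ (m j) h0⁻¹).1 * (u (ψ j)).1 := by
        intro j
        rw [ha]
        simp only []
        rw [map_mul, Matrix.SpecialLinearGroup.coe_mul]
      have h3 : Tendsto (fun j => (ρ (m j) h0⁻¹).1 * (u (ψ j)).1) atTop
          (nhds ((ρlim h0⁻¹).1 * L.1)) := tendsto_mul_mat h1 hLt
      have h4 : (ρlim h0⁻¹).1 * L.1 = (1 : Mat) := by
        rw [map_inv, hh0]
        rw [← Matrix.SpecialLinearGroup.coe_mul, inv_mul_cancel,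
          Matrix.SpecialLinearGroup.coe_one]
      simp only [h2]
      rw [← h4]
      exact h3
    set ε : ℕ → ℝ := fun j => mnorm ((a j).1 - 1) with hε
    have hεt : Tendsto ε atTop (nhds 0) := by
      have := tendsto_mnorm (tendsto_sub_one hatend)
      simp only [sub_self, mnorm_zero] at this
      exact this
    -- the continuum of limits
    have hs : ∀ s : ℝ, s ∈ Set.Ioo (0:ℝ) (1/4) →
        ∃ L' : SL2C, L' ∈ ((ρlim).range : Set SL2C) ∧ mnorm (L'.1 - 1) = s := by
      intro s hsIoo
      obtain ⟨hs0, hs4⟩ := hsIoo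
      set j0 := wordLength S h0 + 1 with hj0
      have hane : ∀ j : ℕ, a (j + j0) ≠ 1 := by
        intro j hone
        have hGne : G (j + j0) ≠ h0 := by
          intro hEq
          have h1 := hwG (j + j0)
          rw [hEq] at h1
          omega
        apply hGne
        have : ρ (m (j + j0)) (h0⁻¹ * G (j + j0)) = ρ (m (j + j0)) 1 := by
          rw [map_one]
          exact hone
        have h2 := hfaith (m (j + j0)) this
        exact (inv_mul_eq_one.1 h2).symm
      -- first shift to make ε ≤ 1
      have hev1 : ∀ᶠ j in atTop, ε (j + j0) ≤ 1 := by
        have ht : Tendsto (fun j : ℕ => ε (j + j0)) atTop (nhds 0) :=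
          hεt.comp (tendsto_add_atTop_nat j0)
        exact ht.eventually_le_const (by norm_num)
      obtain ⟨J1, hJ1⟩ := hev1.exists_forall_of_atTop
      -- window exponents
      have hwin : ∀ j : ℕ, ∃ k : ℕ,
          s ≤ mnorm (((a (j + J1 + j0)) ^ k).1 - 1) ∧
          mnorm (((a (j + J1 + j0)) ^ k).1 - 1) ≤ s + (s + 2) * ε (j + J1 + j0) := by
        intro j
        have := window (a (j + J1 + j0)) (hane (j + J1)) (ε (j + J1 + j0))
          (by rw [hε]) s hs0 hs4
        convert this using 4 <;> omega
      choose k hk1 hk2 using hwin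
      set b : ℕ → SL2C := fun j => (a (j + J1 + j0)) ^ (k j) with hb
      have hbmem : ∀ j, b j ∈ ((ρ (m (j + J1 + j0))).range : Set SL2C) := by
        intro j
        refine ⟨(h0⁻¹ * G (j + J1 + j0)) ^ (k j), ?_⟩
        rw [map_pow]
      have hbb : ∀ j, mnorm (b j).1 ≤ 5 := by
        intro j
        have h1 := hk2 j
        have h2 : ε (j + J1 + j0) ≤ 1 := hJ1 (j + J1) (by omega)
        have h3 : mnorm (b j).1 ≤ mnorm ((b j).1 - 1) + 2 := by
          have he1 : (b j).1 = ((b j).1 - 1) + 1 := by abel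
          calc mnorm ((b j).1) = mnorm (((b j).1 - 1) + 1) := by rw [← he1]
            _ ≤ mnorm ((b j).1 - 1) + mnorm 1 := mnorm_add_le _ _
            _ = mnorm ((b j).1 - 1) + 2 := by rw [mnorm_one]
        have h4 : mnorm ((b j).1 - 1) ≤ s + (s + 2) * 1 := by
          have h5 : 0 ≤ s + 2 := by linarith
          nlinarith [hk2 j, (mnorm_nonneg ((b j).1 - 1))]
        nlinarith
      obtain ⟨ψ2, hψ2, L', hL't⟩ := bw_sl2 b 5 hbb
      refine ⟨L', ?_, ?_⟩
      · have hφ2 : StrictMono (fun i => ψ2 i + J1 + j0) := by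
          intro i i' hii
          simp only []
          have := hψ2 hii
          omega
        apply hGeom.2 (fun i => m (ψ2 i + J1 + j0)) (hmm.comp hφ2)
          (fun i => b (ψ2 i)) (fun i => hbmem (ψ2 i)) L' hL't
      · -- squeeze
        have hvt : Tendsto (fun i => mnorm ((b (ψ2 i)).1 - 1)) atTop
            (nhds (mnorm (L'.1 - 1))) := tendsto_mnorm (tendsto_sub_one hL't)
        have hup : Tendsto (fun i => s + (s + 2) * ε (ψ2 i + J1 + j0)) atTop (nhds s) := by
          have h1 : Tendsto (fun i => ε (ψ2 i + J1 + j0)) atTop (nhds 0) := by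
            apply hεt.comp
            apply StrictMono.tendsto_atTop
            intro i i' hii
            simp only []
            have := hψ2 hii
            omega
          have h2 : Tendsto (fun i => s + (s + 2) * ε (ψ2 i + J1 + j0)) atTop
              (nhds (s + (s + 2) * 0)) := tendsto_const_nhds.add (tendsto_const_nhds.mul h1)
          simpa using h2
        have hle1 : s ≤ mnorm (L'.1 - 1) :=
          le_of_tendsto_of_tendsto' tendsto_const_nhds hvt (fun i => hk1 (ψ2 i))
        have hle2 : mnorm (L'.1 - 1) ≤ s :=
          le_of_tendsto_of_tendsto' hvt hup (fun i => hk2 (ψ2 i))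
        linarith
    -- countability contradiction
    have hTc : ((ρlim).range : Set SL2C).Countable := by
      rw [MonoidHom.coe_range]
      exact Set.countable_range _
    have hIoo : (Set.Ioo (0:ℝ) (1/4)).Countable := by
      apply Set.Countable.mono _ (hTc.image (fun L : SL2C => mnorm (L.1 - 1)))
      intro s hs'
      obtain ⟨L', hL1, hL2⟩ := hs s hs'
      exact ⟨L', hL1, hL2⟩
    have hvol := hIoo.measure_zero MeasureTheory.volume
    rw [Real.volume_Ioo] at hvol
    simp only [ENNReal.ofReal_eq_zero] at hvol
    norm_num at hvol

lemma forward_dir (hgen : Subgroup.closure S = ⊤) (hSfin : S.Finite)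
    (ρ : ℕ → (↥Γ0 →* SL2C)) (ρlim : ↥Γ0 →* SL2C)
    (hfaith : ∀ n, Function.Injective (ρ n))
    (hdisc : ∀ n, DiscreteSG (ρ n).range)
    (halg : ∀ g : ↥Γ0, Tendsto (fun n => ((ρ n g : SL2C) : Matrix (Fin 2) (Fin 2) ℂ))
      atTop (nhds ((ρlim g : SL2C) : Matrix (Fin 2) (Fin 2) ℂ)))
    (hGeom : GeomLimitSet (fun n => ((ρ n).range : Set SL2C)) ((ρlim).range : Set SL2C)) :
    UEP Γ0 S ρ := by
  have key : ∀ c : ℕ, ∃ N : ℕ, ∀ (g : ↥Γ0) (n : ℕ), N ≤ wordLength S g →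
      ((c : ℝ) + 1) ≤ uDist uO (uAct (ρ n g) uO) := by
    intro c
    by_contra hcon
    push_neg at hcon
    choose gs ns hws hds using hcon
    exact main_contra hgen hSfin ρ ρlim hfaith hdisc halg hGeom ((c:ℝ)+1) gs ns hws hds
  choose Nf hNf using key
  set M : ℕ → ℕ := fun c => (Finset.range (c+1)).sup Nf with hM
  have hMmono : Monotone M := by
    intro c c' hcc
    exact Finset.sup_mono (Finset.range_subset_range.2 (by omega))
  refine ⟨fun n => ((Finset.range (n+1)).filter (fun c => M c ≤ n)).card, ?_, ?_⟩
  · rw [tendsto_atTop_atTop]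
    intro c0
    refine ⟨max c0 (M c0), ?_⟩
    intro n hn
    have hsub : Finset.range (c0+1) ⊆ (Finset.range (n+1)).filter (fun c => M c ≤ n) := by
      intro c hc
      rw [Finset.mem_range] at hc
      rw [Finset.mem_filter, Finset.mem_range]
      constructor
      · omega
      · calc M c ≤ M c0 := hMmono (by omega)
          _ ≤ max c0 (M c0) := le_max_right _ _
          _ ≤ n := hn
    calc c0 ≤ c0 + 1 := by omega
      _ = (Finset.range (c0+1)).card := (Finset.card_range _).symm
      _ ≤ _ := Finset.card_le_card hsub
  · intro N g n hN
    show (((Finset.range (N+1)).filter (fun c => M c ≤ N)).card : ℝ) ≤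
      uDist uO (uAct (ρ n g) uO)
    by_cases hTe : ((Finset.range (N+1)).filter (fun c => M c ≤ N)).Nonempty
    · set cm := ((Finset.range (N+1)).filter (fun c => M c ≤ N)).max' hTe with hcm
      have hmem : cm ∈ (Finset.range (N+1)).filter (fun c => M c ≤ N) :=
        Finset.max'_mem _ hTe
      rw [Finset.mem_filter, Finset.mem_range] at hmem
      have h1 : Nf cm ≤ M cm := Finset.le_sup (Finset.self_mem_range_succ cm)
      have h2 : Nf cm ≤ wordLength S g := by
        have := hmem.2
        omega
      have h3 := hNf cm g n h2
      have h4 : ((Finset.range (N+1)).filter (fun c => M c ≤ N)).card ≤ cm + 1 := by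
        have hss : ((Finset.range (N+1)).filter (fun c => M c ≤ N)) ⊆
            Finset.range (cm + 1) := by
          intro c hc
          rw [Finset.mem_range]
          have := Finset.le_max' _ c hc
          omega
        calc ((Finset.range (N+1)).filter (fun c => M c ≤ N)).card
            ≤ (Finset.range (cm+1)).card := Finset.card_le_card hss
          _ = cm + 1 := Finset.card_range _
      calc (((Finset.range (N+1)).filter (fun c => M c ≤ N)).card : ℝ) ≤ (cm : ℝ) + 1 := by
            exact_mod_cast h4
        _ ≤ uDist uO (uAct (ρ n g) uO) := h3
    · rw [Finset.not_nonempty_iff_eq_empty] at hTe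
      rw [hTe]
      simp only [Finset.card_empty, Nat.cast_zero]
      exact uDist_nonneg _ _

end Forward

end UEPaux

/-- A sequence of discrete faithful weakly type preserving
representations of a finitely generated Kleinian group `Γ0` converging algebraically to
`ρlim` converges strongly (i.e. the groups `ρₙ(Γ0)` converge geometrically to `ρlim(Γ0)`)
if and only if it satisfies UEP. -/
theorem stmt12 (Γ0 : Subgroup SL2C) (hΓdisc : DiscreteSG Γ0)
    (S : Set ↥Γ0) (hSfin : S.Finite) (hgen : Subgroup.closure S = ⊤)
    (ρ : ℕ → (↥Γ0 →* SL2C)) (ρlim : ↥Γ0 →* SL2C)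
    (hfaith : ∀ n, Function.Injective (ρ n))
    (hdisc : ∀ n, DiscreteSG (ρ n).range)
    (hwtp : ∀ n, ∀ g : ↥Γ0, IsParabolicSL g.1 → IsParabolicSL (ρ n g))
    (halg : ∀ g : ↥Γ0, Tendsto (fun n => ((ρ n g : SL2C) : Matrix (Fin 2) (Fin 2) ℂ))
      atTop (nhds ((ρlim g : SL2C) : Matrix (Fin 2) (Fin 2) ℂ))) :
    GeomLimitSet (fun n => ((ρ n).range : Set SL2C)) ((ρlim).range : Set SL2C) ↔
      UEP Γ0 S ρ := by
  constructor
  · intro hGeom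
    exact UEPaux.forward_dir hgen hSfin ρ ρlim hfaith hdisc halg hGeom
  · intro hUEP
    exact UEPaux.reverse_dir hgen hSfin ρ ρlim halg hUEP

end
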